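/- arXiv:2108.13325 — 2 statements merged into one kernel-verified Lean document; each statement's English description precedes it below -/
import Mathlib

section
/- If a finite group G contains an abelian subgroup A of index n, then G contains a normal abelian subgroup of index at most n². Consequently, for any group Γ, the Jordan constant satisfies j(Γ) ≤ j_w(Γ)². -/
open Subgroup

section ChermakDelgado

variable {G : Type} [Group G]

/-- The Chermak–Delgado measure of a subgroup. -/
noncomputable def cdMeasure (H : Subgroup G) : ℕ :=
  Nat.card H * Nat.card (centralizer (H : Set G))

variable [Finite G]

lemma cdMeasure_pos (H : Subgroup G) : 0 < cdMeasure H :=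
  Nat.mul_pos Nat.card_pos Nat.card_pos

lemma card_mul_card_le_card_sup_mul_card_inf (H K : Subgroup G) :
    Nat.card H * Nat.card K ≤ Nat.card ↥(H ⊔ K) * Nat.card ↥(H ⊓ K) := by
  have h1 : Nat.card ↥(H ⊓ K) * H.relIndex K = Nat.card K := by
    rw [← inf_relIndex_right H K]
    rw [← card_mul_index ((H ⊓ K).subgroupOf K),
      Nat.card_congr (subgroupOfEquivOfLe (inf_le_right : H ⊓ K ≤ K)).toEquiv]
    rfl
  have h2 : Nat.card H * H.relIndex (H ⊔ K) = Nat.card ↥(H ⊔ K) := by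
    rw [relIndex, ← card_mul_index (H.subgroupOf (H ⊔ K)),
      Nat.card_congr (subgroupOfEquivOfLe (le_sup_left : H ≤ H ⊔ K)).toEquiv]
  have hne : H.relIndex (H ⊔ K) ≠ 0 := Subgroup.index_ne_zero_of_finite
  have h3 : H.relIndex K ≤ H.relIndex (H ⊔ K) :=
    relIndex_le_of_le_right le_sup_right hne
  calc Nat.card H * Nat.card K
      = Nat.card H * (Nat.card ↥(H ⊓ K) * H.relIndex K) := by rw [h1]
    _ = Nat.card H * H.relIndex K * Nat.card ↥(H ⊓ K) := by ring
    _ ≤ Nat.card H * H.relIndex (H ⊔ K) * Nat.card ↥(H ⊓ K) := by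
        exact Nat.mul_le_mul_right _ (Nat.mul_le_mul_left _ h3)
    _ = Nat.card ↥(H ⊔ K) * Nat.card ↥(H ⊓ K) := by rw [h2]

lemma le_centralizer_centralizer' (H : Subgroup G) :
    H ≤ centralizer ((centralizer (H : Set G) : Subgroup G) : Set G) := by
  intro x hx
  rw [mem_centralizer_iff]
  intro y hy
  exact (mem_centralizer_iff.1 hy x hx).symm

lemma inf_centralizer_le (H K : Subgroup G) :
    centralizer (H : Set G) ⊓ centralizer (K : Set G) ≤
      centralizer ((H ⊔ K : Subgroup G) : Set G) := by
  intro x hx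
  obtain ⟨hx1, hx2⟩ := Subgroup.mem_inf.1 hx
  have hH : H ≤ centralizer {x} := fun a ha =>
    mem_centralizer_iff.2 fun h hh => by
      rw [Set.mem_singleton_iff] at hh
      subst hh
      exact (mem_centralizer_iff.1 hx1 a ha).symm
  have hK : K ≤ centralizer {x} := fun a ha =>
    mem_centralizer_iff.2 fun h hh => by
      rw [Set.mem_singleton_iff] at hh
      subst hh
      exact (mem_centralizer_iff.1 hx2 a ha).symm
  rw [mem_centralizer_iff]
  intro h hh
  exact (mem_centralizer_iff.1 (sup_le hH hK hh) x rfl).symm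

lemma cdMeasure_mul_le (H K : Subgroup G) :
    cdMeasure H * cdMeasure K ≤ cdMeasure (H ⊔ K) * cdMeasure (H ⊓ K) := by
  have e1 := card_mul_card_le_card_sup_mul_card_inf H K
  have e2 := card_mul_card_le_card_sup_mul_card_inf
    (centralizer (H : Set G)) (centralizer (K : Set G))
  have l1 : Nat.card ↥(centralizer (H : Set G) ⊔ centralizer (K : Set G)) ≤
      Nat.card ↥(centralizer ((H ⊓ K : Subgroup G) : Set G)) := by
    refine card_le_of_le (sup_le ?_ ?_)
    · exact centralizer_le (by exact_mod_cast inf_le_left)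
    · exact centralizer_le (by exact_mod_cast inf_le_right)
  have l2 : Nat.card ↥(centralizer (H : Set G) ⊓ centralizer (K : Set G)) ≤
      Nat.card ↥(centralizer ((H ⊔ K : Subgroup G) : Set G)) :=
    card_le_of_le (inf_centralizer_le H K)
  unfold cdMeasure
  calc Nat.card H * Nat.card (centralizer (H : Set G))
        * (Nat.card K * Nat.card (centralizer (K : Set G)))
      = (Nat.card H * Nat.card K) *
        (Nat.card (centralizer (H : Set G)) * Nat.card (centralizer (K : Set G))) := by ring
    _ ≤ (Nat.card ↥(H ⊔ K) * Nat.card ↥(H ⊓ K)) *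
        (Nat.card ↥(centralizer (H : Set G) ⊔ centralizer (K : Set G)) *
         Nat.card ↥(centralizer (H : Set G) ⊓ centralizer (K : Set G))) :=
        Nat.mul_le_mul e1 e2
    _ ≤ (Nat.card ↥(H ⊔ K) * Nat.card ↥(H ⊓ K)) *
        (Nat.card ↥(centralizer ((H ⊓ K : Subgroup G) : Set G)) *
         Nat.card ↥(centralizer ((H ⊔ K : Subgroup G) : Set G))) :=
        Nat.mul_le_mul_left _ (Nat.mul_le_mul l1 l2)
    _ = Nat.card ↥(H ⊔ K) * Nat.card (centralizer ((H ⊔ K : Subgroup G) : Set G))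
        * (Nat.card ↥(H ⊓ K) * Nat.card (centralizer ((H ⊓ K : Subgroup G) : Set G))) := by
        ring

lemma centralizer_map (e : G ≃* G) (H : Subgroup G) :
    centralizer ((H.map (e : G →* G) : Subgroup G) : Set G) =
      (centralizer (H : Set G)).map (e : G →* G) := by
  ext x
  constructor
  · intro hx
    refine ⟨e.symm x, ?_, e.apply_symm_apply x⟩
    rw [SetLike.mem_coe, mem_centralizer_iff]
    intro h hh
    apply e.injective
    have : e h ∈ (H.map (e : G →* G) : Set G) := ⟨h, hh, rfl⟩
    have hcomm := mem_centralizer_iff.1 hx (e h) this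
    simp only [map_mul, e.apply_symm_apply]
    rw [← hcomm]
  · rintro ⟨y, hy, rfl⟩
    rw [mem_centralizer_iff]
    rintro h ⟨h₀, hh₀, rfl⟩
    have := mem_centralizer_iff.1 hy h₀ hh₀
    simp only [MonoidHom.coe_coe, ← map_mul]
    rw [this]

lemma cdMeasure_map (e : G ≃* G) (H : Subgroup G) :
    cdMeasure (H.map (e : G →* G)) = cdMeasure H := by
  unfold cdMeasure
  rw [centralizer_map]
  congr 1
  · exact (Nat.card_congr (H.equivMapOfInjective (e : G →* G) e.injective).toEquiv).symm
  · exact (Nat.card_congr ((centralizer (H : Set G)).equivMapOfInjective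
      (e : G →* G) e.injective).toEquiv).symm

/-- Chermak–Delgado: a finite group with an abelian subgroup `A` has a normal abelian
subgroup of index at most `A.index ^ 2`. -/
theorem exists_normal_commutative (A : Subgroup G) (hA : IsMulCommutative A) :
    ∃ B : Subgroup G, B.Normal ∧ IsMulCommutative B ∧ B.index ≤ A.index ^ 2 := by
  haveI : Finite (Subgroup G) :=
    Finite.of_injective (fun H : Subgroup G => (H : Set G)) SetLike.coe_injective
  haveI : Nonempty (Subgroup G) := ⟨⊥⟩
  obtain ⟨H₀, hH₀⟩ := Finite.exists_max (cdMeasure (G := G))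
  set μ := cdMeasure H₀ with hμdef
  have hμpos : 0 < μ := cdMeasure_pos H₀
  have hμA : Nat.card A * Nat.card A ≤ μ := by
    haveI := hA
    calc Nat.card A * Nat.card A
        ≤ Nat.card A * Nat.card (centralizer (A : Set G)) :=
          Nat.mul_le_mul_left _ (card_le_of_le (Subgroup.le_centralizer A))
      _ = cdMeasure A := rfl
      _ ≤ μ := hH₀ A
  have key : ∀ H K : Subgroup G, cdMeasure H = μ → cdMeasure K = μ →
      cdMeasure (H ⊓ K) = μ := by
    intro H K h1 h2
    have h3 := cdMeasure_mul_le H K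
    rw [h1, h2] at h3
    have h4 : cdMeasure (H ⊔ K) * cdMeasure (H ⊓ K) ≤ μ * cdMeasure (H ⊓ K) :=
      Nat.mul_le_mul_right _ (hH₀ (H ⊔ K))
    have h6 : μ ≤ cdMeasure (H ⊓ K) :=
      Nat.le_of_mul_le_mul_left (le_trans h3 h4) hμpos
    exact le_antisymm (hH₀ (H ⊓ K)) h6
  have hC : cdMeasure (centralizer (H₀ : Set G)) = μ := by
    refine le_antisymm (hH₀ _) ?_
    have hcc : Nat.card H₀ ≤
        Nat.card (centralizer ((centralizer (H₀ : Set G) : Subgroup G) : Set G)) :=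
      card_le_of_le (le_centralizer_centralizer' H₀)
    calc μ = Nat.card H₀ * Nat.card (centralizer (H₀ : Set G)) := rfl
      _ ≤ Nat.card (centralizer ((centralizer (H₀ : Set G) : Subgroup G) : Set G))
          * Nat.card (centralizer (H₀ : Set G)) := Nat.mul_le_mul_right _ hcc
      _ = cdMeasure (centralizer (H₀ : Set G)) := by unfold cdMeasure; ring
  set B := H₀ ⊓ centralizer (H₀ : Set G) with hBdef
  have hB : cdMeasure B = μ := key _ _ rfl hC
  -- build the normal subgroup as the intersection of all conjugates of B
  haveI : Fintype G := Fintype.ofFinite G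
  set f : G → Subgroup G := fun g => B.comap ((MulAut.conj g : G ≃* G) : G →* G) with hfdef
  have hf : ∀ g : G, cdMeasure (f g) = μ := by
    intro g
    have : f g = B.map ((MulAut.conj g : G ≃* G).symm : G →* G) :=
      comap_equiv_eq_map_symm _ _
    rw [this, cdMeasure_map]
    exact hB
  have hmemInf : ∀ (s : Finset G) (x : G), x ∈ s.inf f ↔ ∀ g ∈ s, x ∈ f g := by
    intro s x
    rw [Finset.inf_eq_iInf]
    simp [Subgroup.mem_iInf]
  have hind : ∀ s : Finset G, cdMeasure (s.inf f ⊓ B) = μ := by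
    intro s
    classical
    induction s using Finset.induction_on with
    | empty => simpa using hB
    | @insert a s ha ih =>
        rw [Finset.inf_insert, inf_assoc]
        exact key _ _ (hf a) ih
  set N := Finset.univ.inf f ⊓ B with hNdef
  have hN : cdMeasure N = μ := hind _
  have hNB : N ≤ B := inf_le_right
  have hNormal : N.Normal := by
    constructor
    intro x hx h
    obtain ⟨hx1, hx2⟩ := Subgroup.mem_inf.1 hx
    rw [hmemInf] at hx1
    rw [Subgroup.mem_inf, hmemInf]
    constructor
    · intro g _
      have := hx1 (g * h) (Finset.mem_univ _)
      simp only [hfdef, Subgroup.mem_comap, MonoidHom.coe_coe, MulAut.conj_apply] at this ⊢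
      have e : g * (h * x * h⁻¹) * g⁻¹ = g * h * x * (g * h)⁻¹ := by group
      rw [e]
      exact this
    · have := hx1 h (Finset.mem_univ _)
      simp only [hfdef, Subgroup.mem_comap, MonoidHom.coe_coe, MulAut.conj_apply] at this
      exact this
  have hNcomm : IsMulCommutative N := by
    constructor
    constructor
    intro x y
    have hx := hNB x.2
    have hy := hNB y.2
    have hyC : (y : G) ∈ centralizer (H₀ : Set G) := (Subgroup.mem_inf.1 hy).2
    have hxH : (x : G) ∈ H₀ := (Subgroup.mem_inf.1 hx).1
    exact Subtype.ext (mem_centralizer_iff.1 hyC x hxH)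
  refine ⟨N, hNormal, hNcomm, ?_⟩
  have h1 : Nat.card A * Nat.card A ≤ cdMeasure N := hN ▸ hμA
  have h2 : Nat.card ↥(centralizer (N : Set G)) ≤ Nat.card G := card_le_card_group _
  have hcmi : Nat.card N * N.index = Nat.card G := N.card_mul_index
  have hAci : Nat.card A * A.index = Nat.card G := A.card_mul_index
  have hApos : 0 < Nat.card A := Nat.card_pos
  have hmain : (Nat.card A * Nat.card A) * N.index ≤
      (Nat.card A * Nat.card A) * A.index ^ 2 := by
    calc (Nat.card A * Nat.card A) * N.index
        ≤ cdMeasure N * N.index := Nat.mul_le_mul_right _ h1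
      _ = (Nat.card N * N.index) * Nat.card (centralizer (N : Set G)) := by
          unfold cdMeasure; ring
      _ = Nat.card G * Nat.card (centralizer (N : Set G)) := by rw [hcmi]
      _ ≤ Nat.card G * Nat.card G := Nat.mul_le_mul_left _ h2
      _ = (Nat.card A * A.index) * (Nat.card A * A.index) := by rw [hAci]
      _ = (Nat.card A * Nat.card A) * A.index ^ 2 := by ring
  exact Nat.le_of_mul_le_mul_left hmain (Nat.mul_pos hApos hApos)

end ChermakDelgado

/-- A finite group with an abelian subgroup of index n has a normal
abelian subgroup of index at most n²; consequently j(Γ) ≤ j_w(Γ)². -/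
theorem jordan_le_weak_jordan_sq (n j : ℕ) :
    (∀ (G : Type) [Group G] [Finite G] (A : Subgroup G),
        IsMulCommutative A → A.index = n →
        ∃ B : Subgroup G, B.Normal ∧ IsMulCommutative B ∧ B.index ≤ n ^ 2) ∧
    (∀ (Γ : Type) [Group Γ],
        (∀ G : Subgroup Γ, Finite G →
          ∃ A : Subgroup G, IsMulCommutative A ∧ A.index ≤ j) →
        (∀ G : Subgroup Γ, Finite G →
          ∃ A : Subgroup G, A.Normal ∧ IsMulCommutative A ∧ A.index ≤ j ^ 2)) := by
  constructor
  · intro G _ _ A hA hidx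
    obtain ⟨B, h1, h2, h3⟩ := exists_normal_commutative A hA
    exact ⟨B, h1, h2, hidx ▸ h3⟩
  · intro Γ _ hyp G hG
    obtain ⟨A, hAcomm, hAle⟩ := hyp G hG
    obtain ⟨B, h1, h2, h3⟩ := exists_normal_commutative A hAcomm
    exact ⟨B, h1, h2, le_trans h3 (Nat.pow_le_pow_left hAle 2)⟩
end

section
/- Let N be a normal subgroup of a group Γ. If N is Jordan with constant j and Γ/N is bounded with constant b, then Γ is Jordan; explicitly, every finite subgroup G ⊆ Γ contains a normal abelian subgroup of index at most b · j^b. -/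
/-- If N ⊴ Γ is Jordan with constant j and Γ/N is bounded with
constant b, then every finite subgroup of Γ has a normal abelian subgroup of
index at most b·j^b. -/
theorem jordan_of_jordan_by_bounded (Γ : Type*) [Group Γ] (N : Subgroup Γ)
    [N.Normal] (j b : ℕ)
    (hN : ∀ K : Subgroup N, Finite K →
      ∃ A : Subgroup K, A.Normal ∧ IsMulCommutative A ∧ A.index ≤ j)
    (hQ : ∀ K : Subgroup (Γ ⧸ N), Finite K → Nat.card K ≤ b) :
    ∀ G : Subgroup Γ, Finite G →
      ∃ A : Subgroup G, A.Normal ∧ IsMulCommutative A ∧ A.index ≤ b * j ^ b := by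
  -- first: j ≥ 1
  have hj1 : 1 ≤ j := by
    obtain ⟨A, -, -, hA⟩ := hN ⊥ inferInstance
    have : A.index ≠ 0 := Subgroup.index_ne_zero_of_finite
    omega
  intro G hG
  -- K = G ∩ N as a subgroup of N
  set K : Subgroup N := G.subgroupOf N with hKdef
  haveI : Finite K := Finite.of_injective
    (fun x => (⟨(x : N), x.2⟩ : G))
    (by
      intro x y h
      simp only [Subtype.mk.injEq] at h
      exact Subtype.ext (Subtype.ext (by have := congrArg Subtype.val h; exact this))
      )
  obtain ⟨A, hAnorm, hAcomm, hAidx⟩ := hN K ‹Finite K›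
  -- push A into Γ
  set Aγ : Subgroup Γ := (A.map K.subtype).map N.subtype with hAγdef
  haveI : IsMulCommutative Aγ := by
    rw [hAγdef]; infer_instance
  have hAγle : Aγ ≤ G ⊓ N := by
    rintro x hx
    obtain ⟨y, hy, rfl⟩ := hx
    obtain ⟨a, _, rfl⟩ := hy
    exact ⟨a.2, (a : N).2⟩
  -- index of Aγ in G ⊓ N is ≤ j
  have hAγrel : Aγ.relIndex (G ⊓ N) ≤ j := by
    have e0 : K.map N.subtype = G ⊓ N := Subgroup.subgroupOf_map_subtype G N
    have e1 : Aγ.comap N.subtype = A.map K.subtype :=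
      Subgroup.comap_map_eq_self_of_injective N.subtype_injective _
    have e2 : (A.map K.subtype).comap K.subtype = A :=
      Subgroup.comap_map_eq_self_of_injective K.subtype_injective _
    calc Aγ.relIndex (G ⊓ N) = Aγ.relIndex (K.map N.subtype) := by rw [e0]
      _ = (Aγ.comap N.subtype).relIndex K := (Subgroup.relIndex_comap _ _ _).symm
      _ = ((A.map K.subtype).subgroupOf K).index := by rw [e1]; rfl
      _ = A.index := by rw [Subgroup.subgroupOf, e2]
      _ ≤ j := hAidx
  -- G ⊓ N normalizes Aγ
  have hnormd : ∀ h ∈ G ⊓ N, ∀ x ∈ Aγ, h * x * h⁻¹ ∈ Aγ := by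
    rintro h ⟨hhG, hhN⟩ x hx
    obtain ⟨y, hy, rfl⟩ := hx
    obtain ⟨a, ha, rfl⟩ := hy
    set k : K := ⟨⟨h, hhN⟩, by simpa [hKdef, Subgroup.mem_subgroupOf] using hhG⟩ with hk
    refine ⟨((k * a * k⁻¹ : K) : N), ⟨k * a * k⁻¹, hAnorm.conj_mem a ha k, rfl⟩, ?_⟩
    simp [hk]
  have hnormd' : ∀ h ∈ G ⊓ N, ∀ x, h * x * h⁻¹ ∈ Aγ ↔ x ∈ Aγ := by
    intro h hh x
    constructor
    · intro hx
      have := hnormd h⁻¹ (inv_mem hh) _ hx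
      simpa [mul_assoc] using this
    · exact hnormd h hh x
  -- the conjugates of Aγ
  set C : Γ → Subgroup Γ := fun g => Aγ.comap (MulAut.conj g⁻¹).toMonoidHom with hCdef
  have hmemC : ∀ (g x : Γ), x ∈ C g ↔ g⁻¹ * x * g ∈ Aγ := by
    intro g x
    simp [hCdef, Subgroup.mem_comap, MulAut.conj_apply]
  -- C is constant on right cosets of G ⊓ N
  have hconst : ∀ (g h : Γ), h ∈ G ⊓ N → C (g * h) = C g := by
    intro g h hh
    ext x
    rw [hmemC, hmemC]
    have : (g * h)⁻¹ * x * (g * h) = h⁻¹ * (g⁻¹ * x * g) * h := by group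
    rw [this]
    have := hnormd' h⁻¹ (inv_mem hh) (g⁻¹ * x * g)
    simpa using this
  -- the core
  set B : Subgroup Γ := ⨅ g : G, C g with hBdef
  have hmemB : ∀ x, x ∈ B ↔ ∀ g : G, (g : Γ)⁻¹ * x * g ∈ Aγ := by
    intro x
    rw [hBdef, Subgroup.mem_iInf]
    exact forall_congr' fun g => hmemC g x
  have hBle : B ≤ Aγ := by
    intro x hx
    have := (hmemB x).1 hx ⟨1, G.one_mem⟩
    simpa using this
  have hBleG : B ≤ G := hBle.trans (hAγle.trans inf_le_left)
  have hBleGN : B ≤ G ⊓ N := hBle.trans hAγle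
  refine ⟨B.subgroupOf G, ?_, ?_, ?_⟩
  · -- normal in G
    constructor
    intro n hn g
    rw [Subgroup.mem_subgroupOf] at hn ⊢
    rw [hmemB]
    intro k
    have h1 := (hmemB (n : Γ)).1 hn (g⁻¹ * k)
    have : (k : Γ)⁻¹ * (↑(g * n * g⁻¹)) * k
        = ((g⁻¹ * k : G) : Γ)⁻¹ * n * ((g⁻¹ * k : G) : Γ) := by
      push_cast
      group
    rw [this]
    exact h1
  · -- commutative
    constructor; constructor
    intro a b
    have ha : ((a : G) : Γ) ∈ Aγ := hBle ((Subgroup.mem_subgroupOf).1 a.2)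
    have hb : ((b : G) : Γ) ∈ Aγ := hBle ((Subgroup.mem_subgroupOf).1 b.2)
    ext
    exact Subgroup.mul_comm_of_mem_isMulCommutative Aγ ha hb
  · -- index bound
    -- the quotient G / (G ∩ N)
    set H' : Subgroup G := N.subgroupOf G with hH'def
    have hH'idx : H'.index ≤ b := by
      set f : G →* Γ ⧸ N := (QuotientGroup.mk' N).comp G.subtype with hfdef
      have hker : f.ker = H' := by
        rw [hfdef, ← MonoidHom.comap_ker, QuotientGroup.ker_mk']
        rfl
      haveI : Finite f.range :=
        Finite.of_surjective f.rangeRestrict f.rangeRestrict_surjective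
      have := hQ f.range ‹Finite f.range›
      rw [← hker, Subgroup.index_ker]
      exact this
    haveI : Finite (G ⧸ H') := Quotient.finite _
    haveI : Fintype (G ⧸ H') := Fintype.ofFinite _
    have hcard : Nat.card (G ⧸ H') ≤ b := by
      rw [← Subgroup.index_eq_card]
      exact hH'idx
    -- B equals the finite intersection over the quotient
    have hBeq : B = ⨅ q : G ⧸ H', C ↑(Quotient.out q) := by
      apply le_antisymm
      · exact le_iInf fun q => iInf_le _ (Quotient.out q)
      · apply le_iInf
        intro g
        obtain ⟨h, hout⟩ := QuotientGroup.mk_out_eq_mul H' g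
        have hCg : C ↑(Quotient.out (QuotientGroup.mk g : G ⧸ H')) = C ↑g := by
          rw [hout]
          push_cast
          exact hconst _ _ ⟨(h : G).2, (Subgroup.mem_subgroupOf).1 h.2⟩
        calc (⨅ q : G ⧸ H', C ↑(Quotient.out q)) ≤ _ := iInf_le _ (QuotientGroup.mk g)
          _ = C ↑g := hCg
    -- each conjugate has relIndex ≤ j in G ⊓ N
    have hconj : ∀ g : G, (C ↑g).relIndex (G ⊓ N) ≤ j := by
      intro g
      have hmap : (G ⊓ N).map (MulAut.conj ((g : Γ))⁻¹).toMonoidHom = G ⊓ N := by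
        apply le_antisymm
        · rintro _ ⟨y, ⟨hyG, hyN⟩, rfl⟩
          simp only [MulEquiv.coe_toMonoidHom, MulAut.conj_apply, inv_inv]
          exact ⟨G.mul_mem (G.mul_mem (G.inv_mem g.2) hyG) g.2,
            by simpa using Subgroup.Normal.conj_mem ‹N.Normal› y hyN ((g : Γ))⁻¹⟩
        · rintro x ⟨hxG, hxN⟩
          refine ⟨(g : Γ) * x * (g : Γ)⁻¹,
            ⟨G.mul_mem (G.mul_mem g.2 hxG) (G.inv_mem g.2),
              Subgroup.Normal.conj_mem ‹N.Normal› x hxN _⟩, ?_⟩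
          simp only [MulEquiv.coe_toMonoidHom, MulAut.conj_apply, inv_inv]
          group
      have := Subgroup.relIndex_comap Aγ (MulAut.conj ((g : Γ))⁻¹).toMonoidHom (G ⊓ N)
      rw [hmap] at this
      calc (C ↑g).relIndex (G ⊓ N) = Aγ.relIndex (G ⊓ N) := this
        _ ≤ j := hAγrel
    -- put it together
    have hrel1 : B.relIndex (G ⊓ N) ≤ j ^ b := by
      rw [hBeq]
      calc (⨅ q : G ⧸ H', C ↑(Quotient.out q)).relIndex (G ⊓ N)
          ≤ ∏ q : G ⧸ H', (C ↑(Quotient.out q)).relIndex (G ⊓ N) :=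
            Subgroup.relIndex_iInf_le _
        _ ≤ ∏ _q : G ⧸ H', j := Finset.prod_le_prod' fun q _ => hconj _
        _ = j ^ Nat.card (G ⧸ H') := by
            rw [Finset.prod_const, Nat.card_eq_fintype_card, Finset.card_univ]
        _ ≤ j ^ b := Nat.pow_le_pow_right hj1 hcard
    have hrel2 : (G ⊓ N).relIndex G ≤ b := by
      have : (G ⊓ N).relIndex G = H'.index := by
        rw [Subgroup.relIndex, hH'def]
        congr 1
        rw [inf_comm]
        exact Subgroup.inf_subgroupOf_right N G
      rw [this]
      exact hH'idx
    have hmul : B.relIndex (G ⊓ N) * (G ⊓ N).relIndex G = B.relIndex G :=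
      Subgroup.relIndex_mul_relIndex B (G ⊓ N) G hBleGN inf_le_left
    have : (B.subgroupOf G).index = B.relIndex G := rfl
    rw [this, ← hmul, mul_comm]
    exact Nat.mul_le_mul hrel2 hrel1
end
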